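/- Let G be a finite connected network and let P_1,...,P_k be collections of paths such that for every choice of one path P_i from each P_i, the union of the P_i (as subgraphs) contains a path from u to v. Then R_G(u,v) <= sum_{i=1}^k R_G(P_i), where R_G(P_i) denotes the effective resistance restricted to the collection P_i. -/

import Mathlib

open Finset

variable {V : Type} [Fintype V] [DecidableEq V]

/-- `p` is a path from `u` to `v`. -/
def IsPathBetween (adj : V → V → Prop) (u v : V) (p : List V) : Prop :=
  p ≠ [] ∧ p.head? = some u ∧ p.getLast? = some v ∧ p.Chain' adj

/-- `p` is a path (a nonempty list of consecutively adjacent vertices). -/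
def IsPath (adj : V → V → Prop) (p : List V) : Prop :=
  p ≠ [] ∧ p.Chain' adj

/-- Energy of a flow (each unoriented edge counted once). -/
noncomputable def flowEnergy (r : V → V → ℝ) (θ : V → V → ℝ) : ℝ :=
  (1 / 2) * ∑ x, ∑ y, r x y * (θ x y) ^ 2

/-- `θ` is a unit flow from `u` to `v`. -/
def IsUnitFlow (adj : V → V → Prop) (u v : V) (θ : V → V → ℝ) : Prop :=
  (∀ x y, θ x y = -θ y x) ∧ (∀ x y, ¬ adj x y → θ x y = 0) ∧
  (∀ x, x ≠ u → x ≠ v → ∑ y, θ x y = 0) ∧ (∑ y, θ u y = 1)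

/-- Effective resistance via the flow variational formula. -/
noncomputable def effRes (adj : V → V → Prop) (r : V → V → ℝ) (u v : V) : ℝ :=
  sInf { E : ℝ | ∃ θ : V → V → ℝ, IsUnitFlow adj u v θ ∧ E = flowEnergy r θ }

/-- Sum of `w` over the consecutive edges of the path `p`. -/
noncomputable def pathSum (p : List V) (w : V → V → ℝ) : ℝ :=
  ((p.zip p.tail).map fun e => w e.1 e.2).sum

/-- The effective resistance restricted to a collection `Ps` of paths: the infimum over
admissible positive symmetric splittings `(rP p)` of the edge resistances satisfying
`∑_{p ∈ Ps} (rP p x y)⁻¹ ≤ (r x y)⁻¹` on every edge, of the parallel combination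
`(∑_{p ∈ Ps} (resistance of p)⁻¹)⁻¹`. -/
noncomputable def restrictedResP (adj : V → V → Prop) (r : V → V → ℝ)
    (Ps : Finset (List V)) : ℝ :=
  sInf { y : ℝ | ∃ rP : List V → V → V → ℝ,
    (∀ p ∈ Ps, ∀ x y, adj x y → 0 < rP p x y) ∧
    (∀ p ∈ Ps, ∀ x y, rP p x y = rP p y x) ∧
    (∀ x y, adj x y → ∑ p ∈ Ps, (rP p x y)⁻¹ ≤ (r x y)⁻¹) ∧
    y = (∑ p ∈ Ps, (pathSum p (rP p))⁻¹)⁻¹ }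


set_option linter.unusedSectionVars false
set_option maxHeartbeats 1000000
open scoped Classical

section ListAux

/-- telescoping sum along a list -/
lemma sum_zipTail_telescope (φ : V → ℝ) :
    ∀ (l : List V) (a b : V), l.head? = some a → l.getLast? = some b →
      (((l.zip l.tail).map fun e => φ e.2 - φ e.1).sum) = φ b - φ a := by
  intro l
  induction l with
  | nil => intro a b ha hb; simp at ha
  | cons x t ih =>
    intro a b ha hb
    cases t with
    | nil =>
      simp at ha hb; subst ha; subst hb; simp
    | cons y s =>
      have ha' : x = a := by simpa using ha
      subst ha'
      have hb' : (y :: s).getLast? = some b := by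
        rw [List.getLast?_cons_cons] at hb; exact hb
      have := ih y b rfl hb'
      simp only [List.zip_cons_cons, List.tail_cons, List.map_cons, List.sum_cons] at *
      rw [this]; ring

lemma chain'_adj_of_mem_zip {adj : V → V → Prop} :
    ∀ (l : List V), l.Chain' adj → ∀ x y : V, (x, y) ∈ l.zip l.tail → adj x y := by
  intro l
  induction l with
  | nil => intro _ x y h; simp at h
  | cons a t ih =>
    intro hc x y h
    cases t with
    | nil => simp at h
    | cons b s =>
      rw [List.Chain', List.isChain_cons_cons] at hc
      simp only [List.zip_cons_cons, List.tail_cons, List.mem_cons] at h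
      rcases h with h | h
      · cases h; exact hc.1
      · exact ih hc.2 x y h

/-- discrete IVT on a list -/
lemma exists_switch_zip (P : V → Prop) :
    ∀ (l : List V) (a b : V), l.head? = some a → l.getLast? = some b →
      P a → ¬ P b → ∃ e ∈ l.zip l.tail, P e.1 ∧ ¬ P e.2 := by
  intro l
  induction l with
  | nil => intro a b ha; simp at ha
  | cons x t ih =>
    intro a b ha hb hPa hPb
    cases t with
    | nil => simp at ha hb; subst ha; subst hb; exact absurd hPa hPb
    | cons y s =>
      have ha' : x = a := by simpa using ha
      subst ha'
      have hb' : (y :: s).getLast? = some b := by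
        rw [List.getLast?_cons_cons] at hb; exact hb
      by_cases hPy : P y
      · obtain ⟨e, he, h1, h2⟩ := ih y b rfl hb' hPy hPb
        exact ⟨e, by simp only [List.zip_cons_cons, List.tail_cons, List.mem_cons]; right; exact he, h1, h2⟩
      · exact ⟨(x, y), by simp, hPa, hPy⟩

end ListAux


noncomputable section

namespace GSLaux

/-- Dirichlet energy -/
def En (adj : V → V → Prop) (r : V → V → ℝ) (φ : V → ℝ) : ℝ :=
  (1/2) * ∑ x, ∑ y, (if adj x y then (φ y - φ x)^2 / r x y else 0)

/-- raw current -/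
def tr (adj : V → V → Prop) (r : V → V → ℝ) (φ : V → ℝ) (x y : V) : ℝ :=
  if adj x y then (φ y - φ x) / r x y else 0

variable (adj : V → V → Prop) (r : V → V → ℝ)

lemma ite_term_nonneg (hrpos : ∀ x y, adj x y → 0 < r x y) (φ : V → ℝ) (x y : V) :
    0 ≤ (if adj x y then (φ y - φ x)^2 / r x y else 0) := by
  by_cases h : adj x y
  · simp only [h, if_true]; exact div_nonneg (sq_nonneg _) (hrpos x y h).le
  · simp [h]

lemma En_nonneg (hrpos : ∀ x y, adj x y → 0 < r x y) (φ : V → ℝ) : 0 ≤ En adj r φ := by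
  have := ite_term_nonneg adj r hrpos φ
  unfold En
  have h1 : (0:ℝ) ≤ ∑ x, ∑ y, (if adj x y then (φ y - φ x)^2 / r x y else 0) :=
    Finset.sum_nonneg (fun x _ => Finset.sum_nonneg (fun y _ => this x y))
  linarith

lemma term_le_En (hrpos : ∀ x y, adj x y → 0 < r x y) (φ : V → ℝ) (x y : V) (h : adj x y) :
    (φ y - φ x)^2 ≤ r x y * (2 * En adj r φ) := by
  have hterm : (φ y - φ x)^2 / r x y ≤ ∑ a, ∑ b, (if adj a b then (φ b - φ a)^2 / r a b else 0) := by
    have hx : (φ y - φ x)^2 / r x y ≤ ∑ b, (if adj x b then (φ b - φ x)^2 / r x b else 0) := by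
      have := Finset.single_le_sum (f := fun b => (if adj x b then (φ b - φ x)^2 / r x b else 0))
        (fun b _ => ite_term_nonneg adj r hrpos φ x b)
        (Finset.mem_univ y)
      simpa [h] using this
    exact le_trans hx (Finset.single_le_sum
      (f := fun a => ∑ b, (if adj a b then (φ b - φ a)^2 / r a b else 0))
      (fun a _ => Finset.sum_nonneg (fun b _ => ite_term_nonneg adj r hrpos φ a b))
      (Finset.mem_univ x))
  have h2 : ∑ a, ∑ b, (if adj a b then (φ b - φ a)^2 / r a b else 0) = 2 * En adj r φ := by
    unfold En; ring
  rw [h2] at hterm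
  have hr := hrpos x y h
  calc (φ y - φ x)^2 = ((φ y - φ x)^2 / r x y) * r x y := by field_simp
  _ ≤ (2 * En adj r φ) * r x y := by
      apply mul_le_mul_of_nonneg_right hterm hr.le
  _ = r x y * (2 * En adj r φ) := by ring

lemma En_continuous : Continuous fun φ : V → ℝ => En adj r φ := by
  unfold En
  apply Continuous.mul continuous_const
  apply continuous_finset_sum
  intro x _
  apply continuous_finset_sum
  intro y _
  by_cases h : adj x y
  · simp only [h, if_true]
    exact Continuous.div_const (Continuous.pow (Continuous.sub (continuous_apply y) (continuous_apply x)) 2) _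
  · simp only [h, if_false]; exact continuous_const



lemma list_abs_sum_le (l : List ℝ) : |l.sum| ≤ (l.map fun x => |x|).sum := by
  induction l with
  | nil => simp
  | cons a t ih =>
    simp only [List.sum_cons, List.map_cons]
    calc |a + t.sum| ≤ |a| + |t.sum| := abs_add_le _ _
    _ ≤ |a| + (t.map fun x => |x|).sum := by linarith



lemma exists_coercive_bound (hrpos : ∀ x y, adj x y → 0 < r x y)
    (u : V) (hconn : ∀ x y : V, ∃ p : List V, IsPathBetween adj x y p) :
    ∃ K : V → ℝ, ∀ ψ : V → ℝ, ψ u = 0 → ∀ x, |ψ x| ≤ K x * Real.sqrt (2 * En adj r ψ) := by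
  choose pth hpth using hconn
  refine ⟨fun x => (((pth u x).zip (pth u x).tail).map fun e => Real.sqrt (r e.1 e.2)).sum, ?_⟩
  intro ψ hψu x
  obtain ⟨hne, hhd, hlast, hch⟩ := hpth u x
  have tele := sum_zipTail_telescope ψ (pth u x) u x hhd hlast
  have hψx : ψ x = (((pth u x).zip (pth u x).tail).map fun e => ψ e.2 - ψ e.1).sum := by
    rw [tele, hψu]; ring
  rw [hψx]
  calc |(((pth u x).zip (pth u x).tail).map fun e => ψ e.2 - ψ e.1).sum|
      ≤ ((((pth u x).zip (pth u x).tail).map fun e => ψ e.2 - ψ e.1).map fun t => |t|).sum :=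
        list_abs_sum_le _
  _ = (((pth u x).zip (pth u x).tail).map fun e => |ψ e.2 - ψ e.1|).sum := by
        rw [List.map_map]; rfl
  _ ≤ (((pth u x).zip (pth u x).tail).map fun e => Real.sqrt (r e.1 e.2) * Real.sqrt (2 * En adj r ψ)).sum := by
        apply List.sum_le_sum
        intro e he
        have hadj' : adj e.1 e.2 := chain'_adj_of_mem_zip (pth u x) hch e.1 e.2 (by
          simpa using he)
        have hb := term_le_En adj r hrpos ψ e.1 e.2 hadj'
        have h1 : |ψ e.2 - ψ e.1| = Real.sqrt ((ψ e.2 - ψ e.1)^2) := by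
          rw [Real.sqrt_sq_eq_abs]
        rw [h1, ← Real.sqrt_mul (hrpos e.1 e.2 hadj').le]
        exact Real.sqrt_le_sqrt hb
  _ = (((pth u x).zip (pth u x).tail).map fun e => Real.sqrt (r e.1 e.2)).sum * Real.sqrt (2 * En adj r ψ) := by
        rw [← List.sum_map_mul_right]

lemma exists_min_potential (hrpos : ∀ x y, adj x y → 0 < r x y)
    (u v : V) (huv : u ≠ v)
    (hconn : ∀ x y : V, ∃ p : List V, IsPathBetween adj x y p) :
    ∃ φ : V → ℝ, φ u = 0 ∧ φ v = 1 ∧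
      ∀ ψ : V → ℝ, ψ u = 0 → ψ v = 1 → En adj r φ ≤ En adj r ψ := by
  obtain ⟨K, hK⟩ := exists_coercive_bound adj r hrpos u hconn
  set φ₀ : V → ℝ := fun x => if x = v then 1 else 0 with hφ₀def
  have hφ₀u : φ₀ u = 0 := by simp [hφ₀def, huv]
  have hφ₀v : φ₀ v = 1 := by simp [hφ₀def]
  set M := En adj r φ₀ with hMdef
  have hM0 : 0 ≤ M := En_nonneg adj r hrpos φ₀
  set Rad : ℝ := 1 + (∑ x, |K x|) * Real.sqrt (2 * M) with hRad
  have hRad1 : 1 ≤ Rad := by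
    have : 0 ≤ (∑ x, |K x|) * Real.sqrt (2 * M) :=
      mul_nonneg (Finset.sum_nonneg fun x _ => abs_nonneg _) (Real.sqrt_nonneg _)
    linarith
  have hball : ∀ ψ : V → ℝ, ψ u = 0 → En adj r ψ ≤ M → ‖ψ‖ ≤ Rad := by
    intro ψ hψu hE
    rw [pi_norm_le_iff_of_nonneg (by linarith)]
    intro x
    have h1 := hK ψ hψu x
    have h2 : K x * Real.sqrt (2 * En adj r ψ) ≤ |K x| * Real.sqrt (2 * M) := by
      calc K x * Real.sqrt (2 * En adj r ψ) ≤ |K x| * Real.sqrt (2 * En adj r ψ) :=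
            mul_le_mul_of_nonneg_right (le_abs_self _) (Real.sqrt_nonneg _)
      _ ≤ |K x| * Real.sqrt (2 * M) := by
            apply mul_le_mul_of_nonneg_left _ (abs_nonneg _)
            exact Real.sqrt_le_sqrt (by linarith)
    have h3 : |K x| * Real.sqrt (2 * M) ≤ (∑ y, |K y|) * Real.sqrt (2 * M) := by
      apply mul_le_mul_of_nonneg_right _ (Real.sqrt_nonneg _)
      exact Finset.single_le_sum (fun y _ => abs_nonneg (K y)) (Finset.mem_univ x)
    have : |ψ x| ≤ Rad := by rw [hRad]; linarith
    simpa using this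
  set S : Set (V → ℝ) := {ψ | ψ u = 0 ∧ ψ v = 1} with hSdef
  have hSclosed : IsClosed S := by
    apply IsClosed.inter
    · exact isClosed_eq (continuous_apply u) continuous_const
    · exact isClosed_eq (continuous_apply v) continuous_const
  have hCcompact : IsCompact (Metric.closedBall (0 : V → ℝ) Rad ∩ S) :=
    (isCompact_closedBall _ _).inter_right hSclosed
  have hφ₀mem : φ₀ ∈ Metric.closedBall (0 : V → ℝ) Rad ∩ S := by
    constructor
    · rw [Metric.mem_closedBall, dist_zero_right]
      rw [pi_norm_le_iff_of_nonneg (by linarith)]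
      intro x
      simp only [hφ₀def]
      by_cases hx : x = v <;> simp [hx] <;> linarith
    · exact ⟨hφ₀u, hφ₀v⟩
  obtain ⟨φ, hφmem, hφmin⟩ := hCcompact.exists_isMinOn ⟨φ₀, hφ₀mem⟩
    ((En_continuous adj r).continuousOn)
  refine ⟨φ, hφmem.2.1, hφmem.2.2, ?_⟩
  intro ψ hψu hψv
  have hφM : En adj r φ ≤ M := hφmin hφ₀mem
  by_cases hE : En adj r ψ ≤ M
  · exact hφmin ⟨by
      rw [Metric.mem_closedBall, dist_zero_right]; exact hball ψ hψu hE, hψu, hψv⟩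
  · linarith

def Div (φ : V → ℝ) (x : V) : ℝ := ∑ y, tr adj r φ x y

lemma quad_zero {a b : ℝ} (hb : 0 ≤ b) (h : ∀ s : ℝ, 0 ≤ b * s^2 - 2 * s * a) : a = 0 := by
  have hb1 : (0:ℝ) < b + 1 := by linarith
  have h1 := h (a / (b+1))
  have h2 : b * (a / (b+1))^2 - 2 * (a / (b+1)) * a =
      (b * a^2 - 2 * a^2 * (b+1)) / (b+1)^2 := by field_simp
  rw [h2] at h1
  have h3 : 0 ≤ b * a^2 - 2 * a^2 * (b+1) := by
    have := (div_nonneg_iff.mp h1)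
    rcases this with ⟨h4, _⟩ | ⟨h4, h5⟩
    · exact h4
    · nlinarith
  nlinarith [sq_nonneg a]

lemma tr_antisym (hadj : ∀ x y, adj x y → adj y x) (hrsym : ∀ x y, r x y = r y x)
    (φ : V → ℝ) (x y : V) : tr adj r φ x y = - tr adj r φ y x := by
  unfold tr
  by_cases h : adj x y
  · simp only [h, if_true, hadj x y h, if_true, hrsym x y]; ring
  · have h' : ¬ adj y x := fun hc => h (hadj y x hc)
    simp [h, h']

lemma harmonic_of_min (hadj : ∀ x y, adj x y → adj y x) (hrsym : ∀ x y, r x y = r y x)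
    (u v : V) (φ : V → ℝ) (hrpos : ∀ x y, adj x y → 0 < r x y)
    (hmin : ∀ ψ : V → ℝ, ψ u = 0 → ψ v = 1 → En adj r φ ≤ En adj r ψ)
    (hu : φ u = 0) (hv : φ v = 1)
    (x₀ : V) (hx0u : x₀ ≠ u) (hx0v : x₀ ≠ v) : Div adj r φ x₀ = 0 := by
  set A : ℝ := ∑ y ∈ Finset.univ.erase x₀, (if adj x₀ y then 1 / r x₀ y else 0) with hA
  have hA0 : 0 ≤ A := Finset.sum_nonneg fun y _ => by
    by_cases h : adj x₀ y
    · simp only [h, if_true]; exact div_nonneg zero_le_one (hrpos _ _ h).le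
    · simp [h]
  have hDiv : Div adj r φ x₀ = ∑ y ∈ Finset.univ.erase x₀,
      (if adj x₀ y then (φ y - φ x₀) / r x₀ y else 0) := by
    unfold Div tr
    rw [← Finset.add_sum_erase Finset.univ _ (Finset.mem_univ x₀)]
    have : (if adj x₀ x₀ then (φ x₀ - φ x₀) / r x₀ x₀ else 0) = 0 := by
      by_cases h : adj x₀ x₀ <;> simp [h]
    rw [this, zero_add]
  have key : ∀ s : ℝ, En adj r (fun z => if z = x₀ then φ z + s else φ z) =
      En adj r φ + (A * s^2 - 2 * s * Div adj r φ x₀) := by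
    intro s
    set ψ : V → ℝ := fun z => if z = x₀ then φ z + s else φ z with hψ
    set T : V → V → ℝ := fun x y => if adj x y then (φ y - φ x)^2 / r x y else 0 with hT
    set Ts : V → V → ℝ := fun x y => if adj x y then (ψ y - ψ x)^2 / r x y else 0 with hTs
    set G : V → V → ℝ := fun x y => Ts x y - T x y with hG
    have hGoff : ∀ x y : V, x ≠ x₀ → y ≠ x₀ → G x y = 0 := by
      intro x y hx hy
      simp only [hG, hTs, hT, hψ, if_neg hx, if_neg hy, sub_self]
    have hGrow : ∀ x, x ≠ x₀ → ∑ y, G x y = G x x₀ :=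
      fun x hx => Finset.sum_eq_single_of_mem x₀ (Finset.mem_univ _)
        (fun y _ hy => hGoff x y hx hy)
    have hGx0 : ∀ y, y ≠ x₀ → G x₀ y =
        (if adj x₀ y then (s^2 - 2*s*(φ y - φ x₀)) / r x₀ y else 0) := by
      intro y hy
      simp only [hG, hTs, hT, hψ, if_pos rfl, if_neg hy]
      by_cases h : adj x₀ y
      · simp only [h, if_true]; rw [div_sub_div_same]; congr 1; ring
      · simp [h]
    have hGdiag : G x₀ x₀ = 0 := by
      simp only [hG, hTs, hT, hψ, if_pos rfl, sub_self]
    have hGcol : ∀ x, x ≠ x₀ → G x x₀ =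
        (if adj x₀ x then (s^2 - 2*s*(φ x - φ x₀)) / r x₀ x else 0) := by
      intro x hx
      simp only [hG, hTs, hT, hψ, if_pos rfl, if_neg hx]
      by_cases h : adj x x₀
      · have h' := hadj x x₀ h
        simp only [h, if_true, h', if_true, hrsym x x₀]
        rw [div_sub_div_same]; congr 1; ring
      · have h' : ¬ adj x₀ x := fun hc => h (hadj x₀ x hc)
        simp [h, h']
    have hsplit : ∑ x, ∑ y, G x y = (∑ y, G x₀ y) + ∑ x ∈ Finset.univ.erase x₀, G x x₀ := by
      rw [← Finset.add_sum_erase Finset.univ (fun x => ∑ y, G x y) (Finset.mem_univ x₀)]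
      congr 1
      exact Finset.sum_congr rfl fun x hx => hGrow x (Finset.mem_erase.mp hx).1
    have hrow : ∑ y, G x₀ y = ∑ y ∈ Finset.univ.erase x₀,
        (if adj x₀ y then (s^2 - 2*s*(φ y - φ x₀)) / r x₀ y else 0) := by
      rw [← Finset.add_sum_erase Finset.univ (fun y => G x₀ y) (Finset.mem_univ x₀), hGdiag,
        zero_add]
      exact Finset.sum_congr rfl fun y hy => hGx0 y (Finset.mem_erase.mp hy).1
    have hcol : ∑ x ∈ Finset.univ.erase x₀, G x x₀ = ∑ x ∈ Finset.univ.erase x₀,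
        (if adj x₀ x then (s^2 - 2*s*(φ x - φ x₀)) / r x₀ x else 0) :=
      Finset.sum_congr rfl fun x hx => hGcol x (Finset.mem_erase.mp hx).1
    have htot : ∑ x, ∑ y, G x y = 2 * (∑ y ∈ Finset.univ.erase x₀,
        (if adj x₀ y then (s^2 - 2*s*(φ y - φ x₀)) / r x₀ y else 0)) := by
      rw [hsplit, hrow, hcol]; ring
    have hsum3 : ∑ y ∈ Finset.univ.erase x₀,
        (if adj x₀ y then (s^2 - 2*s*(φ y - φ x₀)) / r x₀ y else 0) =
        A * s^2 - 2 * s * Div adj r φ x₀ := by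
      rw [hDiv, hA, Finset.sum_mul, Finset.mul_sum, ← Finset.sum_sub_distrib]
      apply Finset.sum_congr rfl
      intro y _
      by_cases h : adj x₀ y
      · simp only [h, if_true]; field_simp
      · simp [h]
    have hTs_sum : En adj r ψ = (1/2) * ∑ x, ∑ y, Ts x y := rfl
    have hT_sum : En adj r φ = (1/2) * ∑ x, ∑ y, T x y := rfl
    have hGsum : ∑ x, ∑ y, G x y = (∑ x, ∑ y, Ts x y) - (∑ x, ∑ y, T x y) := by
      rw [← Finset.sum_sub_distrib]
      exact Finset.sum_congr rfl fun x _ => by rw [← Finset.sum_sub_distrib]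
    rw [hTs_sum, hT_sum]
    rw [hsum3] at htot
    linarith [hGsum, htot]
  have hfin : ∀ s : ℝ, 0 ≤ A * s^2 - 2 * s * Div adj r φ x₀ := by
    intro s
    have hfeas : (fun z => if z = x₀ then φ z + s else φ z) u = 0 := by
      show (if u = x₀ then φ u + s else φ u) = 0
      rw [if_neg (Ne.symm hx0u)]; exact hu
    have hfeasv : (fun z => if z = x₀ then φ z + s else φ z) v = 1 := by
      show (if v = x₀ then φ v + s else φ v) = 1
      rw [if_neg (Ne.symm hx0v)]; exact hv
    have := hmin (fun z => if z = x₀ then φ z + s else φ z) hfeas hfeasv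
    rw [key s] at this
    linarith
  exact quad_zero hA0 hfin

lemma sum_sum_antisym_zero (f : V → V → ℝ) (hf : ∀ x y, f x y = - f y x) (A : Finset V) :
    ∑ x ∈ A, ∑ y ∈ A, f x y = 0 := by
  have h1 : ∑ x ∈ A, ∑ y ∈ A, f x y = ∑ y ∈ A, ∑ x ∈ A, f x y := Finset.sum_comm
  have h2 : ∑ y ∈ A, ∑ x ∈ A, f x y = ∑ y ∈ A, ∑ x ∈ A, (- f y x) := by
    apply Finset.sum_congr rfl; intro y _; apply Finset.sum_congr rfl; intro x _; rw [hf x y]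
  have h3 : ∑ y ∈ A, ∑ x ∈ A, (- f y x) = - ∑ y ∈ A, ∑ x ∈ A, f y x := by
    simp [Finset.sum_neg_distrib]
  have := h1.trans (h2.trans h3)
  linarith

lemma weighted_div_eq_neg_En (hadj : ∀ x y, adj x y → adj y x)
    (hrsym : ∀ x y, r x y = r y x) (φ : V → ℝ) :
    ∑ x, φ x * Div adj r φ x = - En adj r φ := by
  have hW : ∑ x, φ x * Div adj r φ x = ∑ x, ∑ y, φ x * tr adj r φ x y := by
    apply Finset.sum_congr rfl; intro x _; rw [Div, Finset.mul_sum]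
  set W := ∑ x, ∑ y, φ x * tr adj r φ x y with hWdef
  set W' := ∑ x, ∑ y, φ y * tr adj r φ x y with hW'def
  have hWW' : W' = - W := by
    have h1 : W' = ∑ y, ∑ x, φ y * tr adj r φ x y := Finset.sum_comm
    have h2 : ∑ y, ∑ x, φ y * tr adj r φ x y = ∑ y, ∑ x, - (φ y * tr adj r φ y x) := by
      apply Finset.sum_congr rfl; intro y _; apply Finset.sum_congr rfl; intro x _
      rw [tr_antisym adj r hadj hrsym φ x y]; ring
    rw [h1, h2]
    simp only [Finset.sum_neg_distrib]; rfl
  have hdiff : W - W' = - 2 * En adj r φ := by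
    have h1 : W - W' = ∑ x, ∑ y, (φ x - φ y) * tr adj r φ x y := by
      rw [hWdef, hW'def, ← Finset.sum_sub_distrib]
      apply Finset.sum_congr rfl; intro x _
      rw [← Finset.sum_sub_distrib]
      apply Finset.sum_congr rfl; intro y _; ring
    have h2 : ∀ x y : V, (φ x - φ y) * tr adj r φ x y =
        - (if adj x y then (φ y - φ x)^2 / r x y else 0) := by
      intro x y
      unfold tr
      by_cases h : adj x y
      · simp only [h, if_true]; field_simp; ring
      · simp [h]
    rw [h1]
    have h3 : ∑ x, ∑ y, (φ x - φ y) * tr adj r φ x y =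
        - ∑ x, ∑ y, (if adj x y then (φ y - φ x)^2 / r x y else 0) := by
      rw [← Finset.sum_neg_distrib]
      apply Finset.sum_congr rfl; intro x _
      rw [← Finset.sum_neg_distrib]
      apply Finset.sum_congr rfl; intro y _; exact h2 x y
    rw [h3]; unfold En; ring
  rw [hW]
  have : W = - En adj r φ := by
    have := hWW'
    linarith [hdiff]
  exact this

lemma sum_div_zero (hadj : ∀ x y, adj x y → adj y x)
    (hrsym : ∀ x y, r x y = r y x) (φ : V → ℝ) :
    ∑ x, Div adj r φ x = 0 := by
  have : ∑ x, Div adj r φ x = ∑ x, ∑ y, tr adj r φ x y := rfl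
  rw [this]
  exact sum_sum_antisym_zero (tr adj r φ) (tr_antisym adj r hadj hrsym φ) Finset.univ

lemma div_u_eq_En (hadj : ∀ x y, adj x y → adj y x)
    (hrsym : ∀ x y, r x y = r y x)
    (u v : V) (huv : u ≠ v) (φ : V → ℝ) (hu : φ u = 0) (hv : φ v = 1)
    (hharm : ∀ x, x ≠ u → x ≠ v → Div adj r φ x = 0) :
    Div adj r φ u = En adj r φ := by
  have hW := weighted_div_eq_neg_En adj r hadj hrsym φ
  have hsupp : ∀ x ∈ Finset.univ, x ∉ ({u, v} : Finset V) → φ x * Div adj r φ x = 0 := by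
    intro x _ hx
    simp only [Finset.mem_insert, Finset.mem_singleton] at hx
    push_neg at hx
    rw [hharm x hx.1 hx.2, mul_zero]
  have h1 : ∑ x, φ x * Div adj r φ x = ∑ x ∈ ({u, v} : Finset V), φ x * Div adj r φ x :=
    (Finset.sum_subset (Finset.subset_univ _) hsupp).symm
  rw [Finset.sum_pair huv] at h1
  rw [hu, hv, zero_mul, one_mul, zero_add] at h1
  have hDv : Div adj r φ v = - En adj r φ := by rw [← h1, hW]
  have hsum := sum_div_zero adj r hadj hrsym φ
  have hsupp2 : ∀ x ∈ Finset.univ, x ∉ ({u, v} : Finset V) → Div adj r φ x = 0 := by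
    intro x _ hx
    simp only [Finset.mem_insert, Finset.mem_singleton] at hx
    push_neg at hx
    exact hharm x hx.1 hx.2
  have h2 : ∑ x, Div adj r φ x = ∑ x ∈ ({u, v} : Finset V), Div adj r φ x :=
    (Finset.sum_subset (Finset.subset_univ _) hsupp2).symm
  rw [Finset.sum_pair huv, hDv] at h2
  rw [h2] at hsum
  linarith

lemma En_pos (hrpos : ∀ x y, adj x y → 0 < r x y)
    (u v : V) (huv : u ≠ v) (φ : V → ℝ) (hu : φ u = 0) (hv : φ v = 1)
    (hconn : ∀ x y : V, ∃ p : List V, IsPathBetween adj x y p) :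
    0 < En adj r φ := by
  rcases lt_or_eq_of_le (En_nonneg adj r hrpos φ) with h | h
  · exact h
  exfalso
  have hall : ∀ x y : V, adj x y → φ y = φ x := by
    intro x y hxy
    have hzero : ∑ x, ∑ y, (if adj x y then (φ y - φ x)^2 / r x y else 0) = 0 := by
      have : En adj r φ = 0 := h.symm
      unfold En at this
      linarith
    have hterm := Finset.sum_eq_zero_iff_of_nonneg
      (fun x _ => Finset.sum_nonneg fun y _ => ite_term_nonneg adj r hrpos φ x y) |>.mp hzero
    have hterm2 := Finset.sum_eq_zero_iff_of_nonneg
      (fun y _ => ite_term_nonneg adj r hrpos φ x y) |>.mp (hterm x (Finset.mem_univ x))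
    have := hterm2 y (Finset.mem_univ y)
    rw [if_pos hxy] at this
    have hr := hrpos x y hxy
    field_simp at this
    nlinarith
  obtain ⟨p, hne, hhd, hlast, hch⟩ := hconn u v
  have tele := sum_zipTail_telescope φ p u v hhd hlast
  have hz : ((p.zip p.tail).map fun e => φ e.2 - φ e.1).sum = 0 := by
    apply List.sum_eq_zero
    intro x hx
    simp only [List.mem_map] at hx
    obtain ⟨e, he, rfl⟩ := hx
    have : adj e.1 e.2 := chain'_adj_of_mem_zip p hch e.1 e.2 (by
      cases e; simpa using he)
    rw [hall e.1 e.2 this]; ring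
  rw [hz] at tele
  rw [hu, hv] at tele
  linarith

lemma flux_cut (hadj : ∀ x y, adj x y → adj y x)
    (hrsym : ∀ x y, r x y = r y x)
    (u v : V) (φ : V → ℝ)
    (hharm : ∀ x, x ≠ u → x ≠ v → Div adj r φ x = 0)
    (hDu : Div adj r φ u = En adj r φ)
    (A : Finset V) (huA : u ∈ A) (hvA : v ∉ A) :
    ∑ x ∈ A, ∑ y ∈ Aᶜ, tr adj r φ x y = En adj r φ := by
  have hsplit : ∀ x, Div adj r φ x = (∑ y ∈ A, tr adj r φ x y) + ∑ y ∈ Aᶜ, tr adj r φ x y := by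
    intro x
    rw [Div, ← Finset.sum_add_sum_compl A (tr adj r φ x)]
  have h1 : ∑ x ∈ A, Div adj r φ x =
      (∑ x ∈ A, ∑ y ∈ A, tr adj r φ x y) + ∑ x ∈ A, ∑ y ∈ Aᶜ, tr adj r φ x y := by
    rw [← Finset.sum_add_distrib]
    exact Finset.sum_congr rfl fun x _ => hsplit x
  have h2 : ∑ x ∈ A, ∑ y ∈ A, tr adj r φ x y = 0 :=
    sum_sum_antisym_zero (tr adj r φ) (tr_antisym adj r hadj hrsym φ) A
  have h3 : ∑ x ∈ A, Div adj r φ x = Div adj r φ u :=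
    Finset.sum_eq_single_of_mem u huA fun x hx hxu =>
      hharm x hxu (fun hc => hvA (hc ▸ hx))
  rw [h3, h2, zero_add, hDu] at h1
  linarith

lemma flow_is_unit (hadj : ∀ x y, adj x y → adj y x) (hrsym : ∀ x y, r x y = r y x)
    (u v : V) (φ : V → ℝ)
    (hharm : ∀ x, x ≠ u → x ≠ v → Div adj r φ x = 0)
    (hDu : Div adj r φ u = En adj r φ) (hEnpos : 0 < En adj r φ) :
    IsUnitFlow adj u v (fun x y => tr adj r φ x y / En adj r φ) := by
  refine ⟨?_, ?_, ?_, ?_⟩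
  · intro x y
    show tr adj r φ x y / En adj r φ = - (tr adj r φ y x / En adj r φ)
    rw [tr_antisym adj r hadj hrsym φ x y]; ring
  · intro x y h
    show tr adj r φ x y / En adj r φ = 0
    unfold tr; rw [if_neg h]; simp
  · intro x hxu hxv
    show ∑ y, tr adj r φ x y / En adj r φ = 0
    rw [← Finset.sum_div]
    have := hharm x hxu hxv
    rw [Div] at this
    rw [this]; simp
  · show ∑ y, tr adj r φ u y / En adj r φ = 1
    rw [← Finset.sum_div]
    have h2 : ∑ y, tr adj r φ u y = En adj r φ := hDu
    rw [h2, div_self hEnpos.ne']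

lemma flow_energy_eq (hrpos : ∀ x y, adj x y → 0 < r x y) (φ : V → ℝ)
    (hEnpos : 0 < En adj r φ) :
    flowEnergy r (fun x y => tr adj r φ x y / En adj r φ) = (En adj r φ)⁻¹ := by
  unfold flowEnergy
  have hterm : ∀ x y : V, r x y * (tr adj r φ x y / En adj r φ)^2 =
      (if adj x y then (φ y - φ x)^2 / r x y else 0) / (En adj r φ)^2 := by
    intro x y
    unfold tr
    by_cases h : adj x y
    · simp only [h, if_true]
      have hr := (hrpos x y h).ne'
      field_simp
    · simp [h]
  have h1 : ∑ x, ∑ y, r x y * (tr adj r φ x y / En adj r φ)^2 =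
      (∑ x, ∑ y, (if adj x y then (φ y - φ x)^2 / r x y else 0)) / (En adj r φ)^2 := by
    rw [Finset.sum_div]
    apply Finset.sum_congr rfl; intro x _
    rw [Finset.sum_div]
    exact Finset.sum_congr rfl fun y _ => hterm x y
  rw [h1]
  have h2 : En adj r φ = (1/2) * ∑ x, ∑ y, (if adj x y then (φ y - φ x)^2 / r x y else 0) := rfl
  have hEn := hEnpos.ne'
  field_simp
  nlinarith [h2]

lemma effRes_le_inv_En (hadj : ∀ x y, adj x y → adj y x) (hrsym : ∀ x y, r x y = r y x)
    (hrpos : ∀ x y, adj x y → 0 < r x y)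
    (u v : V) (φ : V → ℝ)
    (hharm : ∀ x, x ≠ u → x ≠ v → Div adj r φ x = 0)
    (hDu : Div adj r φ u = En adj r φ) (hEnpos : 0 < En adj r φ) :
    effRes adj r u v ≤ (En adj r φ)⁻¹ := by
  apply csInf_le
  · refine ⟨0, ?_⟩
    rintro E ⟨θ, hθ, rfl⟩
    unfold flowEnergy
    have : ∀ x y : V, 0 ≤ r x y * (θ x y)^2 := by
      intro x y
      by_cases h : adj x y
      · exact mul_nonneg (hrpos x y h).le (sq_nonneg _)
      · rw [hθ.2.1 x y h]; simp
    have h1 : (0:ℝ) ≤ ∑ x, ∑ y, r x y * (θ x y)^2 :=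
      Finset.sum_nonneg fun x _ => Finset.sum_nonneg fun y _ => this x y
    linarith
  · exact ⟨_, flow_is_unit adj r hadj hrsym u v φ hharm hDu hEnpos,
      (flow_energy_eq adj r hrpos φ hEnpos).symm⟩

def Lv (φ : V → ℝ) : Finset ℝ :=
  ((Finset.univ.image φ) ∪ {0, 1}).filter (fun t => 0 ≤ t ∧ t ≤ 1)

def Lm (φ : V → ℝ) : Finset ℝ := (Lv φ).filter (fun t => t < 1)

noncomputable def nxt (φ : V → ℝ) (c : ℝ) : ℝ :=
  if h : ((Lv φ).filter (fun t => c < t)).Nonempty then ((Lv φ).filter (fun t => c < t)).min' h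
  else 1

lemma zero_mem_Lv (φ : V → ℝ) : (0:ℝ) ∈ Lv φ := by
  unfold Lv
  simp

lemma one_mem_Lv (φ : V → ℝ) : (1:ℝ) ∈ Lv φ := by
  unfold Lv
  simp

lemma Lv_nonneg {φ : V → ℝ} {t : ℝ} (h : t ∈ Lv φ) : 0 ≤ t := by
  unfold Lv at h
  exact (Finset.mem_filter.mp h).2.1

lemma Lv_le_one {φ : V → ℝ} {t : ℝ} (h : t ∈ Lv φ) : t ≤ 1 := by
  unfold Lv at h
  exact (Finset.mem_filter.mp h).2.2

lemma phi_mem_Lv {φ : V → ℝ} (x : V) (h0 : 0 ≤ φ x) (h1 : φ x ≤ 1) : φ x ∈ Lv φ := by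
  unfold Lv
  rw [Finset.mem_filter]
  exact ⟨Finset.mem_union_left _ (Finset.mem_image_of_mem φ (Finset.mem_univ x)), h0, h1⟩

lemma Lm_mem_iff {φ : V → ℝ} {c : ℝ} : c ∈ Lm φ ↔ c ∈ Lv φ ∧ c < 1 := Finset.mem_filter

lemma nxt_filter_nonempty {φ : V → ℝ} {c : ℝ} (h : c ∈ Lm φ) :
    ((Lv φ).filter (fun t => c < t)).Nonempty :=
  ⟨1, Finset.mem_filter.mpr ⟨one_mem_Lv φ, (Lm_mem_iff.mp h).2⟩⟩

lemma nxt_mem {φ : V → ℝ} {c : ℝ} (h : c ∈ Lm φ) : nxt φ c ∈ Lv φ := by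
  unfold nxt
  rw [dif_pos (nxt_filter_nonempty h)]
  exact (Finset.mem_filter.mp (Finset.min'_mem _ _)).1

lemma nxt_gt {φ : V → ℝ} {c : ℝ} (h : c ∈ Lm φ) : c < nxt φ c := by
  unfold nxt
  rw [dif_pos (nxt_filter_nonempty h)]
  exact (Finset.mem_filter.mp (Finset.min'_mem _ _)).2

lemma nxt_le_of {φ : V → ℝ} {c d : ℝ} (h : c ∈ Lm φ) (hd : d ∈ Lv φ) (hcd : c < d) :
    nxt φ c ≤ d := by
  unfold nxt
  rw [dif_pos (nxt_filter_nonempty h)]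
  exact Finset.min'_le _ _ (Finset.mem_filter.mpr ⟨hd, hcd⟩)

lemma nxt_le_one {φ : V → ℝ} {c : ℝ} (h : c ∈ Lm φ) : nxt φ c ≤ 1 :=
  nxt_le_of h (one_mem_Lv φ) (Lm_mem_iff.mp h).2

lemma nxt_le_phi {φ : V → ℝ} {c : ℝ} (h : c ∈ Lm φ) (x : V) (hx : c < φ x) :
    nxt φ c ≤ φ x := by
  by_cases h1 : φ x ≤ 1
  · have h0 : 0 ≤ φ x := le_trans (Lv_nonneg (Lm_mem_iff.mp h).1) hx.le
    exact nxt_le_of h (phi_mem_Lv x h0 h1) hx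
  · push_neg at h1
    linarith [nxt_le_one h]

/-- sum of level lengths is 1 -/
lemma sum_lengths (φ : V → ℝ) : ∑ c ∈ Lm φ, (nxt φ c - c) = 1 := by
  have hLm : Lm φ = (Lv φ).erase 1 := by
    apply Finset.ext
    intro t
    rw [Lm_mem_iff, Finset.mem_erase]
    constructor
    · rintro ⟨h1, h2⟩; exact ⟨ne_of_lt h2, h1⟩
    · rintro ⟨h1, h2⟩; exact ⟨h2, lt_of_le_of_ne (Lv_le_one h2) h1⟩
  have hbij : ∑ c ∈ Lm φ, nxt φ c = ∑ d ∈ (Lv φ).erase 0, d := by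
    apply Finset.sum_bij (fun c _ => nxt φ c)
    · intro c hc
      rw [Finset.mem_erase]
      refine ⟨?_, nxt_mem hc⟩
      have := nxt_gt hc
      have h0 : 0 ≤ c := Lv_nonneg (Lm_mem_iff.mp hc).1
      intro hq; rw [hq] at this; linarith
    · intro c1 hc1 c2 hc2 heq
      by_contra hne
      rcases lt_or_gt_of_ne hne with h | h
      · have := nxt_le_of hc1 (Lm_mem_iff.mp hc2).1 h
        have := nxt_gt hc2
        linarith [heq.le, heq.ge]
      · have := nxt_le_of hc2 (Lm_mem_iff.mp hc1).1 h
        have := nxt_gt hc1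
        linarith [heq.le, heq.ge]
    · intro d hd
      rw [Finset.mem_erase] at hd
      obtain ⟨hd0, hdLv⟩ := hd
      have hdpos : 0 < d := lt_of_le_of_ne (Lv_nonneg hdLv) (Ne.symm hd0)
      have hne : ((Lv φ).filter (fun t => t < d)).Nonempty :=
        ⟨0, Finset.mem_filter.mpr ⟨zero_mem_Lv φ, hdpos⟩⟩
      set c := ((Lv φ).filter (fun t => t < d)).max' hne with hc
      have hcmem : c ∈ (Lv φ).filter (fun t => t < d) := Finset.max'_mem _ _
      have hcLv : c ∈ Lv φ := (Finset.mem_filter.mp hcmem).1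
      have hcd : c < d := (Finset.mem_filter.mp hcmem).2
      have hcLm : c ∈ Lm φ := Lm_mem_iff.mpr ⟨hcLv, lt_of_lt_of_le hcd (Lv_le_one hdLv)⟩
      refine ⟨c, hcLm, ?_⟩
      have h1 : nxt φ c ≤ d := nxt_le_of hcLm hdLv hcd
      have h2 : d ≤ nxt φ c := by
        by_contra hlt
        push_neg at hlt
        have hmem : nxt φ c ∈ (Lv φ).filter (fun t => t < d) :=
          Finset.mem_filter.mpr ⟨nxt_mem hcLm, hlt⟩
        have := Finset.le_max' _ _ hmem
        have := nxt_gt hcLm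
        rw [← hc] at *
        linarith
      linarith [h1, h2]
    · intro c hc; rfl
  have h1 : ∑ c ∈ Lm φ, (nxt φ c - c) = (∑ c ∈ Lm φ, nxt φ c) - ∑ c ∈ Lm φ, c :=
    Finset.sum_sub_distrib _ _
  rw [h1, hbij, hLm]
  rw [Finset.sum_erase_eq_sub (zero_mem_Lv φ), Finset.sum_erase_eq_sub (one_mem_Lv φ)]
  ring

/-- disjoint gaps within [lo,hi] -/
lemma gaps_sum_le (φ : V → ℝ) (lo : ℝ) (Q : Finset ℝ) :
    ∀ (hi : ℝ), (∀ c ∈ Q, c ∈ Lm φ) → (∀ c ∈ Q, lo ≤ c) → (∀ c ∈ Q, nxt φ c ≤ hi) →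
      lo ≤ hi → ∑ c ∈ Q, (nxt φ c - c) ≤ hi - lo := by
  induction Q using Finset.induction_on_max with
  | empty => intro hi _ _ _ h; simp; linarith
  | insert a s ha ih =>
    intro hi hLm hlo hhi hlohi
    have hanotin : a ∉ s := fun hc => lt_irrefl a (ha a hc)
    rw [Finset.sum_insert hanotin]
    have haLm : a ∈ Lm φ := hLm a (Finset.mem_insert_self a s)
    have ihs : ∑ c ∈ s, (nxt φ c - c) ≤ a - lo := by
      apply ih a
      · intro c hc; exact hLm c (Finset.mem_insert_of_mem hc)
      · intro c hc; exact hlo c (Finset.mem_insert_of_mem hc)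
      · intro c hc
        exact nxt_le_of (hLm c (Finset.mem_insert_of_mem hc)) (Lm_mem_iff.mp haLm).1 (ha c hc)
      · exact hlo a (Finset.mem_insert_self a s)
    have h2 : nxt φ a ≤ hi := hhi a (Finset.mem_insert_self a s)
    linarith

/-- traversal `(x,y)` crosses the level gap `(c, nxt c)` downward-up -/
def Crs (φ : V → ℝ) (c : ℝ) (x y : V) : Prop := φ x ≤ c ∧ nxt φ c ≤ φ y

def CrsE (φ : V → ℝ) (c : ℝ) (x y : V) : Prop := Crs φ c x y ∨ Crs φ c y x

/-- level resistance of a path against splitting ρ -/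
noncomputable def sP (φ : V → ℝ) (c : ℝ) (ρ : V → V → ℝ) (p : List V) : ℝ :=
  ((p.zip p.tail).map fun e =>
    if CrsE φ c e.1 e.2 then ρ e.1 e.2 / |φ e.2 - φ e.1| else 0).sum

/-- the oriented cut at level c -/
def cutF (adj : V → V → Prop) (φ : V → ℝ) (c : ℝ) : Finset (V × V) :=
  (Finset.univ ×ˢ Finset.univ).filter
    (fun e => adj e.1 e.2 ∧ φ e.1 ≤ c ∧ nxt φ c ≤ φ e.2)

lemma sP_term_nonneg (adj : V → V → Prop) (φ : V → ℝ) (c : ℝ) (ρ : V → V → ℝ)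
    (hρpos : ∀ x y, adj x y → 0 < ρ x y) (p : List V) (hch : p.Chain' adj) :
    ∀ t ∈ (p.zip p.tail).map (fun e =>
      if CrsE φ c e.1 e.2 then ρ e.1 e.2 / |φ e.2 - φ e.1| else 0), 0 ≤ t := by
  intro t ht
  simp only [List.mem_map] at ht
  obtain ⟨e, he, rfl⟩ := ht
  have hadj : adj e.1 e.2 := chain'_adj_of_mem_zip p hch e.1 e.2 (by cases e; simpa using he)
  by_cases h : CrsE φ c e.1 e.2
  · rw [if_pos h]
    exact div_nonneg (hρpos e.1 e.2 hadj).le (abs_nonneg _)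
  · rw [if_neg h]

lemma sP_nonneg (adj : V → V → Prop) (φ : V → ℝ) (c : ℝ) (ρ : V → V → ℝ)
    (hρpos : ∀ x y, adj x y → 0 < ρ x y) (p : List V) (hch : p.Chain' adj) :
    0 ≤ sP φ c ρ p :=
  List.sum_nonneg (sP_term_nonneg adj φ c ρ hρpos p hch)

lemma sP_ge_term (adj : V → V → Prop) (φ : V → ℝ) (c : ℝ) (ρ : V → V → ℝ)
    (hρpos : ∀ x y, adj x y → 0 < ρ x y) (p : List V) (hch : p.Chain' adj)
    (e : V × V) (he : e ∈ p.zip p.tail) (hcrs : CrsE φ c e.1 e.2) :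
    ρ e.1 e.2 / |φ e.2 - φ e.1| ≤ sP φ c ρ p := by
  have hmem : (if CrsE φ c e.1 e.2 then ρ e.1 e.2 / |φ e.2 - φ e.1| else 0) ∈
      (p.zip p.tail).map (fun e =>
        if CrsE φ c e.1 e.2 then ρ e.1 e.2 / |φ e.2 - φ e.1| else 0) :=
    List.mem_map_of_mem he
  rw [if_pos hcrs] at hmem
  exact List.single_le_sum (sP_term_nonneg adj φ c ρ hρpos p hch) _ hmem

/-- K1: the cut-flux identity at each level -/
lemma cut_flux (adj : V → V → Prop) (r : V → V → ℝ)
    (hadj : ∀ x y, adj x y → adj y x) (hrsym : ∀ x y, r x y = r y x)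
    (u v : V) (φ : V → ℝ) (hu : φ u = 0) (hv : φ v = 1)
    (hharm : ∀ x, x ≠ u → x ≠ v → Div adj r φ x = 0)
    (hDu : Div adj r φ u = En adj r φ)
    (c : ℝ) (hc : c ∈ Lm φ) :
    ∑ e ∈ cutF adj φ c, (φ e.2 - φ e.1) / r e.1 e.2 = En adj r φ := by
  set A : Finset V := Finset.univ.filter (fun x => φ x ≤ c) with hA
  have huA : u ∈ A := by
    rw [hA, Finset.mem_filter]
    exact ⟨Finset.mem_univ u, by rw [hu]; exact Lv_nonneg (Lm_mem_iff.mp hc).1⟩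
  have hvA : v ∉ A := by
    rw [hA, Finset.mem_filter]
    push_neg
    intro _
    rw [hv]
    exact (Lm_mem_iff.mp hc).2
  have hflux := flux_cut adj r hadj hrsym u v φ hharm hDu A huA hvA
  have hprod : ∑ x ∈ A, ∑ y ∈ Aᶜ, tr adj r φ x y = ∑ e ∈ A ×ˢ Aᶜ, tr adj r φ e.1 e.2 :=
    (Finset.sum_product (s := A) (t := Aᶜ) (f := fun e => tr adj r φ e.1 e.2)).symm
  have hsub : cutF adj φ c ⊆ A ×ˢ Aᶜ := by
    intro e he
    rw [cutF, Finset.mem_filter] at he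
    obtain ⟨_, hadje, h1, h2⟩ := he
    rw [Finset.mem_product]
    constructor
    · rw [hA, Finset.mem_filter]; exact ⟨Finset.mem_univ _, h1⟩
    · rw [Finset.mem_compl, hA, Finset.mem_filter]
      push_neg
      intro _
      have := nxt_gt hc
      linarith
  have hzero : ∀ e ∈ A ×ˢ Aᶜ, e ∉ cutF adj φ c → tr adj r φ e.1 e.2 = 0 := by
    intro e he hne
    rw [Finset.mem_product] at he
    obtain ⟨h1, h2⟩ := he
    rw [hA, Finset.mem_filter] at h1
    rw [Finset.mem_compl, hA, Finset.mem_filter] at h2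
    push_neg at h2
    have h2' : c < φ e.2 := h2 (Finset.mem_univ _)
    by_cases hadje : adj e.1 e.2
    · exfalso
      apply hne
      rw [cutF, Finset.mem_filter]
      exact ⟨Finset.mem_product.mpr ⟨Finset.mem_univ _, Finset.mem_univ _⟩, hadje, h1.2,
        nxt_le_phi hc e.2 h2'⟩
    · unfold tr; rw [if_neg hadje]
  have heq : ∑ e ∈ A ×ˢ Aᶜ, tr adj r φ e.1 e.2 = ∑ e ∈ cutF adj φ c, tr adj r φ e.1 e.2 :=
    (Finset.sum_subset hsub hzero).symm
  have hval : ∀ e ∈ cutF adj φ c, tr adj r φ e.1 e.2 = (φ e.2 - φ e.1) / r e.1 e.2 := by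
    intro e he
    rw [cutF, Finset.mem_filter] at he
    unfold tr
    rw [if_pos he.2.1]
  rw [hprod, heq] at hflux
  rw [← hflux]
  exact (Finset.sum_congr rfl hval).symm

/-- K2: at a level where all paths of the collection cross, the level conductance
is at most the cut current `En`. -/
lemma level_bound (adj : V → V → Prop) (r : V → V → ℝ)
    (hadj : ∀ x y, adj x y → adj y x) (hrsym : ∀ x y, r x y = r y x)
    (hrpos : ∀ x y, adj x y → 0 < r x y)
    (u v : V) (φ : V → ℝ) (hu : φ u = 0) (hv : φ v = 1)
    (hharm : ∀ x, x ≠ u → x ≠ v → Div adj r φ x = 0)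
    (hDu : Div adj r φ u = En adj r φ)
    (c : ℝ) (hc : c ∈ Lm φ)
    (Q : Finset (List V)) (ρ : List V → V → V → ℝ)
    (hρpos : ∀ p ∈ Q, ∀ x y, adj x y → 0 < ρ p x y)
    (hρsym : ∀ p ∈ Q, ∀ x y, ρ p x y = ρ p y x)
    (hρcon : ∀ x y, adj x y → ∑ p ∈ Q, (ρ p x y)⁻¹ ≤ (r x y)⁻¹)
    (hch : ∀ p ∈ Q, p.Chain' adj)
    (hcross : ∀ p ∈ Q, ∃ e ∈ p.zip p.tail, CrsE φ c e.1 e.2) :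
    ∑ p ∈ Q, (sP φ c (ρ p) p)⁻¹ ≤ En adj r φ := by
  classical
  -- canonical crossing edge of each path
  have hsel : ∀ p ∈ Q, ∃ e : V × V, e ∈ cutF adj φ c ∧
      (sP φ c (ρ p) p)⁻¹ ≤ (φ e.2 - φ e.1) * (ρ p e.1 e.2)⁻¹ := by
    intro p hp
    obtain ⟨e, he, hcrs⟩ := hcross p hp
    have hadje : adj e.1 e.2 := chain'_adj_of_mem_zip p (hch p hp) e.1 e.2
      (by cases e; simpa using he)
    have hterm := sP_ge_term adj φ c (ρ p) (hρpos p hp) p (hch p hp) e he hcrs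
    have hρe : 0 < ρ p e.1 e.2 := hρpos p hp e.1 e.2 hadje
    have hgap : 0 < nxt φ c - c := by linarith [nxt_gt hc]
    rcases hcrs with h | h
    · -- e itself is oriented low-to-high
      refine ⟨e, ?_, ?_⟩
      · rw [cutF, Finset.mem_filter]
        exact ⟨Finset.mem_product.mpr ⟨Finset.mem_univ _, Finset.mem_univ _⟩, hadje, h.1, h.2⟩
      · have habs : |φ e.2 - φ e.1| = φ e.2 - φ e.1 := by
          rw [abs_of_pos]
          obtain ⟨h1, h2⟩ := h
          have := nxt_gt hc
          linarith
        have hd : 0 < φ e.2 - φ e.1 := by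
          obtain ⟨h1, h2⟩ := h
          have := nxt_gt hc
          linarith
        have htermpos : 0 < ρ p e.1 e.2 / |φ e.2 - φ e.1| := by
          rw [habs]; positivity
        have h3 := inv_anti₀ htermpos hterm
        rw [inv_div, habs] at h3
        calc (sP φ c (ρ p) p)⁻¹ ≤ (φ e.2 - φ e.1) / ρ p e.1 e.2 := h3
        _ = (φ e.2 - φ e.1) * (ρ p e.1 e.2)⁻¹ := by rw [div_eq_mul_inv]
    · -- reversed orientation
      refine ⟨(e.2, e.1), ?_, ?_⟩
      · rw [cutF, Finset.mem_filter]
        exact ⟨Finset.mem_product.mpr ⟨Finset.mem_univ _, Finset.mem_univ _⟩,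
          hadj _ _ hadje, h.1, h.2⟩
      · have habs : |φ e.2 - φ e.1| = φ e.1 - φ e.2 := by
          rw [abs_of_neg]
          · ring
          · obtain ⟨h1, h2⟩ := h
            have := nxt_gt hc
            linarith
        have hd : 0 < φ e.1 - φ e.2 := by
          obtain ⟨h1, h2⟩ := h
          have := nxt_gt hc
          linarith
        have htermpos : 0 < ρ p e.1 e.2 / |φ e.2 - φ e.1| := by
          rw [habs]; positivity
        have h3 := inv_anti₀ htermpos hterm
        rw [inv_div, habs] at h3
        have hsym' : ρ p e.2 e.1 = ρ p e.1 e.2 := (hρsym p hp e.2 e.1)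
        show (sP φ c (ρ p) p)⁻¹ ≤ (φ e.1 - φ e.2) * (ρ p e.2 e.1)⁻¹
        rw [hsym', ← div_eq_mul_inv]
        exact h3
  have hsel' : ∀ p : List V, ∃ e : V × V, p ∈ Q → (e ∈ cutF adj φ c ∧
      (sP φ c (ρ p) p)⁻¹ ≤ (φ e.2 - φ e.1) * (ρ p e.1 e.2)⁻¹) := by
    intro p
    by_cases hp : p ∈ Q
    · obtain ⟨e, h1, h2⟩ := hsel p hp
      exact ⟨e, fun _ => ⟨h1, h2⟩⟩
    · exact ⟨(u, u), fun h => absurd h hp⟩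
  choose ce hce using hsel'
  have hce1 : ∀ p ∈ Q, ce p ∈ cutF adj φ c := fun p hp => (hce p hp).1
  have hce2 : ∀ p ∈ Q, (sP φ c (ρ p) p)⁻¹ ≤
      (φ (ce p).2 - φ (ce p).1) * (ρ p (ce p).1 (ce p).2)⁻¹ := fun p hp => (hce p hp).2
  calc ∑ p ∈ Q, (sP φ c (ρ p) p)⁻¹
      ≤ ∑ p ∈ Q, (φ (ce p).2 - φ (ce p).1) * (ρ p (ce p).1 (ce p).2)⁻¹ := by
        apply Finset.sum_le_sum
        intro p hp
        exact hce2 p hp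
  _ = ∑ e ∈ cutF adj φ c, ∑ p ∈ Q.filter (fun p => ce p = e),
        (φ e.2 - φ e.1) * (ρ p e.1 e.2)⁻¹ := by
        rw [← Finset.sum_fiberwise_of_maps_to (fun p hp => hce1 p hp)]
        apply Finset.sum_congr rfl
        intro e _
        apply Finset.sum_congr rfl
        intro p hp
        rw [(Finset.mem_filter.mp hp).2]
  _ ≤ ∑ e ∈ cutF adj φ c, (φ e.2 - φ e.1) / r e.1 e.2 := by
        apply Finset.sum_le_sum
        intro e he
        rw [cutF, Finset.mem_filter] at he
        obtain ⟨_, hadje, h1, h2⟩ := he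
        have hd : 0 ≤ φ e.2 - φ e.1 := by
          have := nxt_gt hc
          linarith
        rw [← Finset.mul_sum]
        rw [div_eq_mul_inv]
        apply mul_le_mul_of_nonneg_left _ hd
        calc ∑ p ∈ Q.filter (fun p => ce p = e), (ρ p e.1 e.2)⁻¹
            ≤ ∑ p ∈ Q, (ρ p e.1 e.2)⁻¹ := by
              apply Finset.sum_le_sum_of_subset_of_nonneg (Finset.filter_subset _ _)
              intro p hp _
              exact (inv_nonneg).mpr (hρpos p hp e.1 e.2 hadje).le
        _ ≤ (r e.1 e.2)⁻¹ := hρcon e.1 e.2 hadje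
  _ = En adj r φ := cut_flux adj r hadj hrsym u v φ hu hv hharm hDu c hc

lemma finset_sum_list_sum {α : Type*} (F : Finset ℝ) (f : ℝ → α → ℝ) :
    ∀ l : List α, ∑ c ∈ F, (l.map (f c)).sum = (l.map (fun a => ∑ c ∈ F, f c a)).sum := by
  intro l
  induction l with
  | nil => simp
  | cons a t ih =>
    simp only [List.map_cons, List.sum_cons]
    rw [Finset.sum_add_distrib, ih]

/-- K3: path resistance dominates the level decomposition -/
lemma path_level_bound (adj : V → V → Prop) (φ : V → ℝ) (ρ : V → V → ℝ)
    (hρpos : ∀ x y, adj x y → 0 < ρ x y) (p : List V) (hch : p.Chain' adj) :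
    ∑ c ∈ Lm φ, (nxt φ c - c) * sP φ c ρ p ≤ pathSum p ρ := by
  have hstep1 : ∀ c : ℝ, (nxt φ c - c) * sP φ c ρ p =
      ((p.zip p.tail).map fun e =>
        (nxt φ c - c) * (if CrsE φ c e.1 e.2 then ρ e.1 e.2 / |φ e.2 - φ e.1| else 0)).sum := by
    intro c
    rw [sP, ← List.sum_map_mul_left]
  have hswap : ∑ c ∈ Lm φ, (nxt φ c - c) * sP φ c ρ p =
      ((p.zip p.tail).map fun e => ∑ c ∈ Lm φ,
        (nxt φ c - c) * (if CrsE φ c e.1 e.2 then ρ e.1 e.2 / |φ e.2 - φ e.1| else 0)).sum := by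
    rw [← finset_sum_list_sum]
    exact Finset.sum_congr rfl fun c _ => hstep1 c
  rw [hswap, pathSum]
  apply List.sum_le_sum
  intro e he
  have hadje : adj e.1 e.2 := chain'_adj_of_mem_zip p hch e.1 e.2 (by cases e; simpa using he)
  have hρe : 0 < ρ e.1 e.2 := hρpos e.1 e.2 hadje
  set lo := min (φ e.1) (φ e.2) with hlo
  set hi := max (φ e.1) (φ e.2) with hhi
  have habs : hi - lo = |φ e.2 - φ e.1| := by
    rw [hhi, hlo, max_sub_min_eq_abs, abs_sub_comm]
  have hfilter : ∑ c ∈ Lm φ, (nxt φ c - c) *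
      (if CrsE φ c e.1 e.2 then ρ e.1 e.2 / |φ e.2 - φ e.1| else 0) =
      (∑ c ∈ (Lm φ).filter (fun c => CrsE φ c e.1 e.2), (nxt φ c - c)) *
        (ρ e.1 e.2 / |φ e.2 - φ e.1|) := by
    rw [Finset.sum_mul, Finset.sum_filter]
    apply Finset.sum_congr rfl
    intro c _
    by_cases h : CrsE φ c e.1 e.2 <;> simp [h]
  rw [hfilter]
  have hQ := gaps_sum_le φ lo ((Lm φ).filter (fun c => CrsE φ c e.1 e.2)) hi
    (fun c hc => (Finset.mem_filter.mp hc).1)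
    (fun c hc => by
      rcases (Finset.mem_filter.mp hc).2 with h | h
      · exact le_trans (min_le_left _ _) h.1
      · exact le_trans (min_le_right _ _) h.1)
    (fun c hc => by
      rcases (Finset.mem_filter.mp hc).2 with h | h
      · exact le_trans h.2 (le_max_right _ _)
      · exact le_trans h.2 (le_max_left _ _))
    (min_le_max)
  have hsum_nonneg : 0 ≤ ∑ c ∈ (Lm φ).filter (fun c => CrsE φ c e.1 e.2), (nxt φ c - c) :=
    Finset.sum_nonneg fun c hc => by
      have := nxt_gt (φ := φ) (Finset.mem_filter.mp hc).1
      linarith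
  by_cases hd : |φ e.2 - φ e.1| = 0
  · rw [hd, div_zero, mul_zero]
    exact hρe.le
  · have hdpos : 0 < |φ e.2 - φ e.1| := lt_of_le_of_ne (abs_nonneg _) (Ne.symm hd)
    calc (∑ c ∈ (Lm φ).filter (fun c => CrsE φ c e.1 e.2), (nxt φ c - c)) *
          (ρ e.1 e.2 / |φ e.2 - φ e.1|)
        ≤ |φ e.2 - φ e.1| * (ρ e.1 e.2 / |φ e.2 - φ e.1|) := by
          apply mul_le_mul_of_nonneg_right _ (div_nonneg hρe.le (abs_nonneg _))
          rw [← habs]; exact hQ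
    _ = ρ e.1 e.2 := by field_simp

/-- K4: at every level some collection crosses entirely -/
lemma exists_crossing_collection (adj : V → V → Prop)
    (u v : V) (φ : V → ℝ) (hu : φ u = 0) (hv : φ v = 1)
    (k : ℕ) (Ps : Fin k → Finset (List V))
    (hcover : ∀ f : Fin k → List V, (∀ i, f i ∈ Ps i) →
      ∃ q : List V, IsPathBetween adj u v q ∧
        ∀ e ∈ q.zip q.tail, ∃ i, e ∈ (f i).zip (f i).tail ∨
          (e.2, e.1) ∈ (f i).zip (f i).tail)
    (c : ℝ) (hc : c ∈ Lm φ) :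
    ∃ i, ∀ p ∈ Ps i, ∃ e ∈ p.zip p.tail, CrsE φ c e.1 e.2 := by
  by_contra hcon
  push_neg at hcon
  have hcon' : ∀ i, ∃ p, p ∈ Ps i ∧ ∀ e ∈ p.zip p.tail, ¬ CrsE φ c e.1 e.2 := by
    intro i
    obtain ⟨p, hp1, hp2⟩ := hcon i
    exact ⟨p, hp1, fun e he hcr => hp2 e he hcr⟩
  choose f hf1 hf2 using hcon'
  obtain ⟨q, ⟨hqne, hqh, hql, hqch⟩, hcov⟩ := hcover f hf1
  have hstart : φ u ≤ c := by rw [hu]; exact Lv_nonneg (Lm_mem_iff.mp hc).1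
  have hend : ¬ (φ v ≤ c) := by rw [hv]; push_neg; exact (Lm_mem_iff.mp hc).2
  obtain ⟨e, he, h1, h2⟩ := exists_switch_zip (fun x => φ x ≤ c) q u v hqh hql hstart hend
  push_neg at h2
  have hcrs : Crs φ c e.1 e.2 := ⟨h1, nxt_le_phi hc e.2 h2⟩
  obtain ⟨i, hi⟩ := hcov e he
  rcases hi with hmem | hmem
  · exact hf2 i e hmem (Or.inl hcrs)
  · exact hf2 i (e.2, e.1) hmem (Or.inr hcrs)

/-- guarded level parallel resistance of a collection -/
noncomputable def Pc (φ : V → ℝ) (Q : Finset (List V)) (ρ : List V → V → V → ℝ) (c : ℝ) : ℝ :=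
  if (∀ p ∈ Q, ∃ e ∈ p.zip p.tail, CrsE φ c e.1 e.2) then
    (∑ p ∈ Q, (sP φ c (ρ p) p)⁻¹)⁻¹ else 0

lemma pathSum_nonneg (adj : V → V → Prop) (ρ : V → V → ℝ)
    (hρpos : ∀ x y, adj x y → 0 < ρ x y) (p : List V) (hch : p.Chain' adj) :
    0 ≤ pathSum p ρ := by
  apply List.sum_nonneg
  intro t ht
  simp only [List.mem_map] at ht
  obtain ⟨e, he, rfl⟩ := ht
  exact (hρpos e.1 e.2 (chain'_adj_of_mem_zip p hch e.1 e.2 (by cases e; simpa using he))).le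

lemma Pc_nonneg (adj : V → V → Prop) (φ : V → ℝ) (Q : Finset (List V))
    (ρ : List V → V → V → ℝ)
    (hρpos : ∀ p ∈ Q, ∀ x y, adj x y → 0 < ρ p x y)
    (hch : ∀ p ∈ Q, p.Chain' adj) (c : ℝ) : 0 ≤ Pc φ Q ρ c := by
  unfold Pc
  by_cases h : (∀ p ∈ Q, ∃ e ∈ p.zip p.tail, CrsE φ c e.1 e.2)
  · rw [if_pos h]
    apply inv_nonneg.mpr
    exact Finset.sum_nonneg fun p hp =>
      inv_nonneg.mpr (sP_nonneg adj φ c (ρ p) (hρpos p hp) p (hch p hp))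
  · rw [if_neg h]

lemma sP_pos_of_guard (adj : V → V → Prop) (φ : V → ℝ) (Q : Finset (List V))
    (ρ : List V → V → V → ℝ)
    (hρpos : ∀ p ∈ Q, ∀ x y, adj x y → 0 < ρ p x y)
    (hch : ∀ p ∈ Q, p.Chain' adj) (c : ℝ) (hc : c ∈ Lm φ)
    (hguard : ∀ p ∈ Q, ∃ e ∈ p.zip p.tail, CrsE φ c e.1 e.2)
    (p : List V) (hp : p ∈ Q) : 0 < sP φ c (ρ p) p := by
  obtain ⟨e, he, hcrs⟩ := hguard p hp
  have hadje : adj e.1 e.2 := chain'_adj_of_mem_zip p (hch p hp) e.1 e.2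
    (by cases e; simpa using he)
  have hterm := sP_ge_term adj φ c (ρ p) (hρpos p hp) p (hch p hp) e he hcrs
  have hd : 0 < |φ e.2 - φ e.1| := by
    have hgap := nxt_gt hc
    rcases hcrs with h | h
    · rw [abs_pos]; intro hz; obtain ⟨h1, h2⟩ := h; rw [sub_eq_zero] at hz; linarith
    · rw [abs_pos]; intro hz; obtain ⟨h1, h2⟩ := h; rw [sub_eq_zero] at hz; linarith
  have : 0 < ρ p e.1 e.2 / |φ e.2 - φ e.1| :=
    div_pos (hρpos p hp e.1 e.2 hadje) hd
  linarith

/-- K5 (Milne / series-parallel exchange) -/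
lemma milne (adj : V → V → Prop) (φ : V → ℝ) (Q : Finset (List V)) (hQne : Q.Nonempty)
    (ρ : List V → V → V → ℝ)
    (hρpos : ∀ p ∈ Q, ∀ x y, adj x y → 0 < ρ p x y)
    (hch : ∀ p ∈ Q, p.Chain' adj) :
    ∑ c ∈ Lm φ, (nxt φ c - c) * Pc φ Q ρ c ≤ (∑ p ∈ Q, (pathSum p (ρ p))⁻¹)⁻¹ := by
  set B := ∑ c ∈ Lm φ, (nxt φ c - c) * Pc φ Q ρ c with hB
  set Sg := ∑ p ∈ Q, (pathSum p (ρ p))⁻¹ with hSg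
  have hSg0 : 0 ≤ Sg :=
    Finset.sum_nonneg fun p hp =>
      inv_nonneg.mpr (pathSum_nonneg adj (ρ p) (hρpos p hp) p (hch p hp))
  by_cases hBpos : 0 < B
  swap
  · push_neg at hBpos
    exact le_trans hBpos (inv_nonneg.mpr hSg0)
  -- find a level with positive contribution
  have hex : ∃ c₀ ∈ Lm φ, 0 < Pc φ Q ρ c₀ := by
    by_contra hno
    push_neg at hno
    have : B = 0 := by
      rw [hB]
      apply Finset.sum_eq_zero
      intro c hcm
      have h1 : Pc φ Q ρ c ≤ 0 := hno c hcm
      have h2 : 0 ≤ Pc φ Q ρ c := Pc_nonneg adj φ Q ρ hρpos hch c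
      have : Pc φ Q ρ c = 0 := le_antisymm h1 h2
      rw [this, mul_zero]
    rw [this] at hBpos
    exact lt_irrefl 0 hBpos
  obtain ⟨c₀, hc₀m, hc₀pos⟩ := hex
  have hguard₀ : ∀ p ∈ Q, ∃ e ∈ p.zip p.tail, CrsE φ c₀ e.1 e.2 := by
    by_contra hng
    rw [Pc, if_neg hng] at hc₀pos
    exact lt_irrefl 0 hc₀pos
  have hSpos : ∀ p ∈ Q, 0 < pathSum p (ρ p) := by
    intro p hp
    have h1 := path_level_bound adj φ (ρ p) (hρpos p hp) p (hch p hp)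
    have h2 : (nxt φ c₀ - c₀) * sP φ c₀ (ρ p) p ≤
        ∑ c ∈ Lm φ, (nxt φ c - c) * sP φ c (ρ p) p := by
      apply Finset.single_le_sum (f := fun c => (nxt φ c - c) * sP φ c (ρ p) p) _ hc₀m
      intro c hcm
      exact mul_nonneg (by linarith [nxt_gt (φ := φ) hcm])
        (sP_nonneg adj φ c (ρ p) (hρpos p hp) p (hch p hp))
    have h3 : 0 < (nxt φ c₀ - c₀) * sP φ c₀ (ρ p) p := by
      apply mul_pos (by linarith [nxt_gt (φ := φ) hc₀m])
      exact sP_pos_of_guard adj φ Q ρ hρpos hch c₀ hc₀m hguard₀ p hp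
    linarith
  have hSgpos : 0 < Sg := by
    rw [hSg]
    apply Finset.sum_pos _ hQne
    intro p hp
    exact inv_pos.mpr (hSpos p hp)
  -- the key quadratic bound : B^2 * Sg ≤ B
  have hkey : B * B * Sg ≤ B := by
    have hperp : ∀ p ∈ Q, B * B * (pathSum p (ρ p))⁻¹ ≤
        ∑ c ∈ Lm φ, (nxt φ c - c) * (sP φ c (ρ p) p)⁻¹ * (Pc φ Q ρ c)^2 := by
      intro p hp
      set f : ℝ → ℝ := fun c => Real.sqrt ((nxt φ c - c) * sP φ c (ρ p) p) with hf
      set g : ℝ → ℝ := fun c => Real.sqrt ((nxt φ c - c) * (sP φ c (ρ p) p)⁻¹) * Pc φ Q ρ c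
        with hg
      have hfg : ∀ c ∈ Lm φ, f c * g c = (nxt φ c - c) * Pc φ Q ρ c := by
        intro c hcm
        have hl : 0 ≤ nxt φ c - c := by linarith [nxt_gt (φ := φ) hcm]
        by_cases hs : 0 < sP φ c (ρ p) p
        · rw [hf, hg]
          have h1 : Real.sqrt ((nxt φ c - c) * sP φ c (ρ p) p) *
              Real.sqrt ((nxt φ c - c) * (sP φ c (ρ p) p)⁻¹) = nxt φ c - c := by
            rw [← Real.sqrt_mul (by positivity)]
            have : (nxt φ c - c) * sP φ c (ρ p) p * ((nxt φ c - c) * (sP φ c (ρ p) p)⁻¹) =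
                (nxt φ c - c)^2 := by
              field_simp
            rw [this, Real.sqrt_sq hl]
          rw [← mul_assoc, h1]
        · have hs0 : sP φ c (ρ p) p = 0 :=
            le_antisymm (by push_neg at hs; exact hs)
              (sP_nonneg adj φ c (ρ p) (hρpos p hp) p (hch p hp))
          have hPc0 : Pc φ Q ρ c = 0 := by
            rw [Pc]
            by_cases hgu : ∀ p' ∈ Q, ∃ e ∈ p'.zip p'.tail, CrsE φ c e.1 e.2
            · exfalso
              have := sP_pos_of_guard adj φ Q ρ hρpos hch c hcm hgu p hp
              linarith
            · rw [if_neg hgu]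
          simp only [hg, hPc0, mul_zero]
      have hcs := Finset.sum_mul_sq_le_sq_mul_sq (Lm φ) f g
      have hBfg : B = ∑ c ∈ Lm φ, f c * g c := by
        rw [hB]
        exact Finset.sum_congr rfl fun c hcm => (hfg c hcm).symm
      have hf2 : ∑ c ∈ Lm φ, (f c)^2 ≤ pathSum p (ρ p) := by
        have heq : ∀ c ∈ Lm φ, (f c)^2 = (nxt φ c - c) * sP φ c (ρ p) p := by
          intro c hcm
          rw [hf]
          apply Real.sq_sqrt
          exact mul_nonneg (by linarith [nxt_gt (φ := φ) hcm])
            (sP_nonneg adj φ c (ρ p) (hρpos p hp) p (hch p hp))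
        rw [Finset.sum_congr rfl heq]
        exact path_level_bound adj φ (ρ p) (hρpos p hp) p (hch p hp)
      have hg2 : ∑ c ∈ Lm φ, (g c)^2 =
          ∑ c ∈ Lm φ, (nxt φ c - c) * (sP φ c (ρ p) p)⁻¹ * (Pc φ Q ρ c)^2 := by
        apply Finset.sum_congr rfl
        intro c hcm
        rw [hg, mul_pow, Real.sq_sqrt (mul_nonneg (by linarith [nxt_gt (φ := φ) hcm])
          (inv_nonneg.mpr (sP_nonneg adj φ c (ρ p) (hρpos p hp) p (hch p hp))))]
      have hcs2 : B^2 ≤ pathSum p (ρ p) *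
          (∑ c ∈ Lm φ, (nxt φ c - c) * (sP φ c (ρ p) p)⁻¹ * (Pc φ Q ρ c)^2) := by
        rw [hBfg]
        calc (∑ c ∈ Lm φ, f c * g c)^2 ≤ (∑ c ∈ Lm φ, (f c)^2) * ∑ c ∈ Lm φ, (g c)^2 := hcs
        _ ≤ pathSum p (ρ p) * ∑ c ∈ Lm φ, (nxt φ c - c) * (sP φ c (ρ p) p)⁻¹ *
              (Pc φ Q ρ c)^2 := by
            rw [hg2]
            apply mul_le_mul_of_nonneg_right hf2
            apply Finset.sum_nonneg
            intro c hcm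
            apply mul_nonneg (mul_nonneg (by linarith [nxt_gt (φ := φ) hcm])
              (inv_nonneg.mpr (sP_nonneg adj φ c (ρ p) (hρpos p hp) p (hch p hp)))) (sq_nonneg _)
      have hSp := hSpos p hp
      calc B * B * (pathSum p (ρ p))⁻¹ = B^2 * (pathSum p (ρ p))⁻¹ := by ring
      _ ≤ (pathSum p (ρ p) * (∑ c ∈ Lm φ, (nxt φ c - c) * (sP φ c (ρ p) p)⁻¹ *
            (Pc φ Q ρ c)^2)) * (pathSum p (ρ p))⁻¹ := by
          apply mul_le_mul_of_nonneg_right hcs2 (inv_nonneg.mpr hSp.le)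
      _ = ∑ c ∈ Lm φ, (nxt φ c - c) * (sP φ c (ρ p) p)⁻¹ * (Pc φ Q ρ c)^2 := by
          field_simp
    calc B * B * Sg = ∑ p ∈ Q, B * B * (pathSum p (ρ p))⁻¹ := by
          rw [hSg, Finset.mul_sum]
    _ ≤ ∑ p ∈ Q, ∑ c ∈ Lm φ, (nxt φ c - c) * (sP φ c (ρ p) p)⁻¹ * (Pc φ Q ρ c)^2 :=
          Finset.sum_le_sum hperp
    _ = ∑ c ∈ Lm φ, ∑ p ∈ Q, (nxt φ c - c) * (sP φ c (ρ p) p)⁻¹ * (Pc φ Q ρ c)^2 :=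
          Finset.sum_comm
    _ ≤ ∑ c ∈ Lm φ, (nxt φ c - c) * Pc φ Q ρ c := by
          apply Finset.sum_le_sum
          intro c hcm
          have hl : 0 ≤ nxt φ c - c := by linarith [nxt_gt (φ := φ) hcm]
          by_cases hgu : ∀ p' ∈ Q, ∃ e ∈ p'.zip p'.tail, CrsE φ c e.1 e.2
          · have hPdef : Pc φ Q ρ c = (∑ p ∈ Q, (sP φ c (ρ p) p)⁻¹)⁻¹ := by rw [Pc, if_pos hgu]
            have hsum_pos : 0 < ∑ p ∈ Q, (sP φ c (ρ p) p)⁻¹ := by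
              apply Finset.sum_pos _ hQne
              intro p hp
              exact inv_pos.mpr (sP_pos_of_guard adj φ Q ρ hρpos hch c hcm hgu p hp)
            have h1 : ∑ p ∈ Q, (nxt φ c - c) * (sP φ c (ρ p) p)⁻¹ * (Pc φ Q ρ c)^2 =
                (nxt φ c - c) * (Pc φ Q ρ c)^2 * ∑ p ∈ Q, (sP φ c (ρ p) p)⁻¹ := by
              rw [Finset.mul_sum]
              apply Finset.sum_congr rfl
              intro p hp
              ring
            rw [h1, hPdef]
            have hne := hsum_pos.ne'
            have heq : (nxt φ c - c) * ((∑ p ∈ Q, (sP φ c (ρ p) p)⁻¹)⁻¹)^2 *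
                (∑ p ∈ Q, (sP φ c (ρ p) p)⁻¹) =
                (nxt φ c - c) * (∑ p ∈ Q, (sP φ c (ρ p) p)⁻¹)⁻¹ := by
              rw [pow_two, mul_assoc, mul_assoc, inv_mul_cancel₀ hne, mul_one]
            rw [heq]
          · have hPdef : Pc φ Q ρ c = 0 := by rw [Pc, if_neg hgu]
            rw [hPdef]
            simp
  -- conclude
  have hBSg : B * Sg ≤ 1 := by nlinarith [hkey, hBpos]
  have h2 : B * Sg * Sg⁻¹ ≤ 1 * Sg⁻¹ := mul_le_mul_of_nonneg_right hBSg (inv_nonneg.mpr hSg0)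
  rw [mul_assoc, mul_inv_cancel₀ hSgpos.ne', mul_one, one_mul] at h2
  exact h2

/-- K6: the main inequality against arbitrary admissible splittings -/
lemma main_ineq (adj : V → V → Prop) (r : V → V → ℝ)
    (hadj : ∀ x y, adj x y → adj y x) (hrsym : ∀ x y, r x y = r y x)
    (hrpos : ∀ x y, adj x y → 0 < r x y)
    (u v : V) (φ : V → ℝ) (hu : φ u = 0) (hv : φ v = 1)
    (hharm : ∀ x, x ≠ u → x ≠ v → Div adj r φ x = 0)
    (hDu : Div adj r φ u = En adj r φ) (hEnpos : 0 < En adj r φ)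
    (k : ℕ) (Ps : Fin k → Finset (List V))
    (hpath : ∀ i, ∀ p ∈ Ps i, IsPath adj p)
    (hnonempty : ∀ i, (Ps i).Nonempty)
    (hcover : ∀ f : Fin k → List V, (∀ i, f i ∈ Ps i) →
      ∃ q : List V, IsPathBetween adj u v q ∧
        ∀ e ∈ q.zip q.tail, ∃ i, e ∈ (f i).zip (f i).tail ∨
          (e.2, e.1) ∈ (f i).zip (f i).tail)
    (ρ : Fin k → List V → V → V → ℝ)
    (hρpos : ∀ i, ∀ p ∈ Ps i, ∀ x y, adj x y → 0 < ρ i p x y)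
    (hρsym : ∀ i, ∀ p ∈ Ps i, ∀ x y, ρ i p x y = ρ i p y x)
    (hρcon : ∀ i, ∀ x y, adj x y → ∑ p ∈ Ps i, (ρ i p x y)⁻¹ ≤ (r x y)⁻¹) :
    (En adj r φ)⁻¹ ≤ ∑ i, (∑ p ∈ Ps i, (pathSum p (ρ i p))⁻¹)⁻¹ := by
  have hchain : ∀ i, ∀ p ∈ Ps i, p.Chain' adj := fun i p hp => (hpath i p hp).2
  calc (En adj r φ)⁻¹ = ∑ c ∈ Lm φ, (nxt φ c - c) * (En adj r φ)⁻¹ := by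
        rw [← Finset.sum_mul, sum_lengths, one_mul]
  _ ≤ ∑ c ∈ Lm φ, (nxt φ c - c) * (∑ i, Pc φ (Ps i) (ρ i) c) := by
      apply Finset.sum_le_sum
      intro c hcm
      apply mul_le_mul_of_nonneg_left _ (by linarith [nxt_gt (φ := φ) hcm])
      obtain ⟨i₀, hi₀⟩ := exists_crossing_collection adj u v φ hu hv k Ps hcover c hcm
      have hP0 : Pc φ (Ps i₀) (ρ i₀) c = (∑ p ∈ Ps i₀, (sP φ c (ρ i₀ p) p)⁻¹)⁻¹ := by
        rw [Pc, if_pos hi₀]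
      have hsum_pos : 0 < ∑ p ∈ Ps i₀, (sP φ c (ρ i₀ p) p)⁻¹ := by
        apply Finset.sum_pos _ (hnonempty i₀)
        intro p hp
        exact inv_pos.mpr (sP_pos_of_guard adj φ (Ps i₀) (ρ i₀) (hρpos i₀) (hchain i₀)
          c hcm hi₀ p hp)
      have hle : ∑ p ∈ Ps i₀, (sP φ c (ρ i₀ p) p)⁻¹ ≤ En adj r φ :=
        level_bound adj r hadj hrsym hrpos u v φ hu hv hharm hDu c hcm (Ps i₀) (ρ i₀)
          (hρpos i₀) (hρsym i₀) (hρcon i₀) (hchain i₀) hi₀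
      have h1 : (En adj r φ)⁻¹ ≤ Pc φ (Ps i₀) (ρ i₀) c := by
        rw [hP0]
        exact inv_anti₀ hsum_pos hle
      have h2 : Pc φ (Ps i₀) (ρ i₀) c ≤ ∑ i, Pc φ (Ps i) (ρ i) c :=
        Finset.single_le_sum (f := fun i => Pc φ (Ps i) (ρ i) c)
          (fun i _ => Pc_nonneg adj φ (Ps i) (ρ i) (hρpos i) (hchain i) c) (Finset.mem_univ i₀)
      linarith
  _ = ∑ i, ∑ c ∈ Lm φ, (nxt φ c - c) * Pc φ (Ps i) (ρ i) c := by
      rw [← Finset.sum_comm]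
      apply Finset.sum_congr rfl
      intro c _
      rw [Finset.mul_sum]
  _ ≤ ∑ i, (∑ p ∈ Ps i, (pathSum p (ρ i p))⁻¹)⁻¹ := by
      apply Finset.sum_le_sum
      intro i _
      exact milne adj φ (Ps i) (hnonempty i) (ρ i) (hρpos i) (hchain i)

end GSLaux

/-- Generalized series law (Lemma 2.4): if `Ps 1, ..., Ps k` are nonempty collections of paths
such that for every choice of one path from each collection the union of the chosen paths
(as subgraphs) contains a path from `u` to `v`, then
`R(u, v) ≤ ∑ i, R(Ps i)`. -/
theorem effRes_le_sum_restricted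
    (adj : V → V → Prop) (r : V → V → ℝ)
    (hadj : ∀ x y, adj x y → adj y x)
    (hrsym : ∀ x y, r x y = r y x)
    (hrpos : ∀ x y, adj x y → 0 < r x y)
    (hconn : ∀ x y : V, ∃ p : List V, IsPathBetween adj x y p)
    (u v : V) (huv : u ≠ v)
    (k : ℕ) (Ps : Fin k → Finset (List V))
    (hpath : ∀ i, ∀ p ∈ Ps i, IsPath adj p)
    (hnonempty : ∀ i, (Ps i).Nonempty)
    (hcover : ∀ f : Fin k → List V, (∀ i, f i ∈ Ps i) →
      ∃ q : List V, IsPathBetween adj u v q ∧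
        ∀ e ∈ q.zip q.tail, ∃ i, e ∈ (f i).zip (f i).tail ∨
          (e.2, e.1) ∈ (f i).zip (f i).tail) :
    effRes adj r u v ≤ ∑ i, restrictedResP adj r (Ps i) := by
  classical
  by_cases hk : k = 0
  · exfalso
    subst hk
    obtain ⟨q, ⟨hqne, hqh, hql, hqch⟩, hcov⟩ := hcover (fun i => i.elim0) (fun i => i.elim0)
    cases q with
    | nil => exact hqne rfl
    | cons a t =>
      cases t with
      | nil =>
        have ha : a = u := by simpa using hqh
        have hb : a = v := by simpa using hql
        exact huv (ha ▸ hb ▸ rfl)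
      | cons b s =>
        obtain ⟨i, _⟩ := hcov (a, b) (by simp)
        exact i.elim0
  · have hkpos : 0 < (k : ℝ) := by
      exact_mod_cast Nat.pos_of_ne_zero hk
    obtain ⟨φ, hu, hv, hmin⟩ := GSLaux.exists_min_potential adj r hrpos u v huv hconn
    have hharm : ∀ x, x ≠ u → x ≠ v → GSLaux.Div adj r φ x = 0 :=
      fun x hxu hxv =>
        GSLaux.harmonic_of_min adj r hadj hrsym u v φ hrpos hmin hu hv x hxu hxv
    have hDu := GSLaux.div_u_eq_En adj r hadj hrsym u v huv φ hu hv hharm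
    have hEnpos := GSLaux.En_pos adj r hrpos u v huv φ hu hv hconn
    have hR := GSLaux.effRes_le_inv_En adj r hadj hrsym hrpos u v φ hharm hDu hEnpos
    apply le_of_forall_pos_le_add
    intro ε hε
    have hchoice : ∀ i : Fin k, ∃ rP : List V → V → V → ℝ,
        (∀ p ∈ Ps i, ∀ x y, adj x y → 0 < rP p x y) ∧
        (∀ p ∈ Ps i, ∀ x y, rP p x y = rP p y x) ∧
        (∀ x y, adj x y → ∑ p ∈ Ps i, (rP p x y)⁻¹ ≤ (r x y)⁻¹) ∧
        (∑ p ∈ Ps i, (pathSum p (rP p))⁻¹)⁻¹ < restrictedResP adj r (Ps i) + ε / k := by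
      intro i
      have hcard : 0 < ((Ps i).card : ℝ) := by
        exact_mod_cast Finset.card_pos.mpr (hnonempty i)
      set S : Set ℝ := { y : ℝ | ∃ rP : List V → V → V → ℝ,
        (∀ p ∈ Ps i, ∀ x y, adj x y → 0 < rP p x y) ∧
        (∀ p ∈ Ps i, ∀ x y, rP p x y = rP p y x) ∧
        (∀ x y, adj x y → ∑ p ∈ Ps i, (rP p x y)⁻¹ ≤ (r x y)⁻¹) ∧
        y = (∑ p ∈ Ps i, (pathSum p (rP p))⁻¹)⁻¹ } with hSdef
      have hrestr : restrictedResP adj r (Ps i) = sInf S := rfl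
      have hSne : S.Nonempty := by
        refine ⟨(∑ p ∈ Ps i, (pathSum p
          (fun x y => ((Ps i).card : ℝ) * r x y))⁻¹)⁻¹,
          ⟨fun _ => fun x y => ((Ps i).card : ℝ) * r x y, ?_, ?_, ?_, rfl⟩⟩
        · intro p _ x y hxy
          exact mul_pos hcard (hrpos x y hxy)
        · intro p _ x y
          show ((Ps i).card : ℝ) * r x y = ((Ps i).card : ℝ) * r y x
          rw [hrsym x y]
        · intro x y hxy
          show ∑ _p ∈ Ps i, (((Ps i).card : ℝ) * r x y)⁻¹ ≤ (r x y)⁻¹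
          rw [Finset.sum_const]
          have hr := hrpos x y hxy
          have : (((Ps i).card : ℝ) * r x y)⁻¹ = ((Ps i).card : ℝ)⁻¹ * (r x y)⁻¹ := by
            rw [mul_inv]
          rw [this, nsmul_eq_mul, ← mul_assoc, mul_inv_cancel₀ hcard.ne', one_mul]
      obtain ⟨a, ha, hlt⟩ := Real.lt_sInf_add_pos hSne (div_pos hε hkpos)
      rw [hSdef] at ha
      obtain ⟨rP, h1, h2, h3, h4⟩ := ha
      exact ⟨rP, h1, h2, h3, by rw [← h4, hrestr]; exact hlt⟩
    choose ρ h1 h2 h3 h4 using hchoice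
    have hmain := GSLaux.main_ineq adj r hadj hrsym hrpos u v φ hu hv hharm hDu hEnpos
      k Ps hpath hnonempty hcover ρ h1 h2 h3
    calc effRes adj r u v ≤ (GSLaux.En adj r φ)⁻¹ := hR
    _ ≤ ∑ i, (∑ p ∈ Ps i, (pathSum p (ρ i p))⁻¹)⁻¹ := hmain
    _ ≤ ∑ i, (restrictedResP adj r (Ps i) + ε / k) :=
        Finset.sum_le_sum fun i _ => (h4 i).le
    _ = (∑ i, restrictedResP adj r (Ps i)) + ε := by
        rw [Finset.sum_add_distrib, Finset.sum_const, Finset.card_univ, Fintype.card_fin,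
          nsmul_eq_mul]
        congr 1
        field_simp
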